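/- Let X be a real Banach space and let Y = Y₁ ⊕_a Y₂ be the absolute sum of real Banach spaces Y₁ and Y₂ with respect to an absolute norm N (so Y₁ is an absolute summand of Y). If the pair (X, Y₁ ⊕_a Y₂) has the pointwise BPB property, then the pair (X, Y₁) has the pointwise BPB property. -/

import Mathlib

open Filter Topology

/-- `N` is an absolute norm on `ℝ²`: a norm with `N(1,0)=N(0,1)=1` and
`N(s,t)=N(|s|,|t|)`. -/
structure IsAbsoluteNorm (N : ℝ → ℝ → ℝ) : Prop where
  nonneg : ∀ s t : ℝ, 0 ≤ N s t
  eq_zero_iff : ∀ s t : ℝ, N s t = 0 ↔ s = 0 ∧ t = 0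
  triangle : ∀ s₁ t₁ s₂ t₂ : ℝ, N (s₁ + s₂) (t₁ + t₂) ≤ N s₁ t₁ + N s₂ t₂
  smul : ∀ c s t : ℝ, N (c * s) (c * t) = |c| * N s t
  one_zero : N 1 0 = 1
  zero_one : N 0 1 = 1
  abs_eq : ∀ s t : ℝ, N s t = N |s| |t|

/-- The pair `(X, Y)` has the pointwise Bishop–Phelps–Bollobás property. -/
def HasPointwiseBPB (X Y : Type*) [NormedAddCommGroup X] [NormedSpace ℝ X]
    [NormedAddCommGroup Y] [NormedSpace ℝ Y] : Prop :=
  ∀ ε : ℝ, 0 < ε → ∃ η : ℝ, 0 < η ∧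
    ∀ (T : X →L[ℝ] Y) (x₀ : X), ‖T‖ = 1 → ‖x₀‖ = 1 → 1 - η < ‖T x₀‖ →
      ∃ S : X →L[ℝ] Y, ‖S‖ = 1 ∧ ‖S x₀‖ = 1 ∧ ‖S - T‖ < ε

namespace IsAbsoluteNorm

variable {N : ℝ → ℝ → ℝ} (hN : IsAbsoluteNorm N)
include hN

lemma fst_zero {s : ℝ} (hs : 0 ≤ s) : N s 0 = s := by
  have := hN.smul s 1 0
  rw [mul_one, mul_zero, hN.one_zero, mul_one, abs_of_nonneg hs] at this
  exact this

lemma snd_zero {t : ℝ} (ht : 0 ≤ t) : N 0 t = t := by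
  have := hN.smul t 0 1
  rw [mul_one, mul_zero, hN.zero_one, mul_one, abs_of_nonneg ht] at this
  exact this

lemma mono_left {s s' : ℝ} (t : ℝ) (hs : 0 ≤ s) (hss : s ≤ s') : N s t ≤ N s' t := by
  rcases eq_or_lt_of_le (hs.trans hss) with h0 | h0
  · obtain rfl : s' = 0 := h0.symm
    obtain rfl : s = 0 := le_antisymm hss hs
    exact le_rfl
  · set lam := (s' + s) / (2 * s') with hlam
    set mu := (s' - s) / (2 * s') with hmu
    have hne' : s' ≠ 0 := h0.ne'
    have hlm : lam + mu = 1 := by rw [hlam, hmu]; field_simp [hne']; ring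
    have hl0 : 0 ≤ lam := by positivity
    have hm0 : 0 ≤ mu := by
      apply div_nonneg (by linarith) (by linarith)
    have key : s = lam * s' + mu * (-s') := by rw [hlam, hmu]; field_simp [hne']; ring
    have keyt : t = lam * t + mu * t := by rw [← add_mul, hlm, one_mul]
    calc N s t = N (lam * s' + mu * (-s')) (lam * t + mu * t) := by rw [← key, ← keyt]
    _ ≤ N (lam * s') (lam * t) + N (mu * (-s')) (mu * t) := hN.triangle _ _ _ _
    _ = lam * N s' t + mu * N (-s') t := by
        rw [hN.smul, hN.smul, abs_of_nonneg hl0, abs_of_nonneg hm0]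
    _ = lam * N s' t + mu * N s' t := by
        rw [hN.abs_eq (-s') t, abs_neg, ← hN.abs_eq]
    _ = N s' t := by rw [← add_mul, hlm, one_mul]

lemma mono_right (s : ℝ) {t t' : ℝ} (ht : 0 ≤ t) (htt : t ≤ t') : N s t ≤ N s t' := by
  rcases eq_or_lt_of_le (ht.trans htt) with h0 | h0
  · obtain rfl : t' = 0 := h0.symm
    obtain rfl : t = 0 := le_antisymm htt ht
    exact le_refl _
  · set lam := (t' + t) / (2 * t') with hlam
    set mu := (t' - t) / (2 * t') with hmu
    have hne' : t' ≠ 0 := h0.ne'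
    have hlm : lam + mu = 1 := by rw [hlam, hmu]; field_simp [hne']; ring
    have hl0 : 0 ≤ lam := by positivity
    have hm0 : 0 ≤ mu := div_nonneg (by linarith) (by linarith)
    have key : t = lam * t' + mu * (-t') := by
      rw [hlam, hmu]; field_simp [hne']; ring
    have keys : s = lam * s + mu * s := by rw [← add_mul, hlm, one_mul]
    calc N s t = N (lam * s + mu * s) (lam * t' + mu * (-t')) := by rw [← key, ← keys]
    _ ≤ N (lam * s) (lam * t') + N (mu * s) (mu * (-t')) := hN.triangle _ _ _ _
    _ = lam * N s t' + mu * N s (-t') := by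
        rw [hN.smul, hN.smul, abs_of_nonneg hl0, abs_of_nonneg hm0]
    _ = lam * N s t' + mu * N s t' := by
        rw [hN.abs_eq s (-t'), abs_neg, ← hN.abs_eq]
    _ = N s t' := by rw [← add_mul, hlm, one_mul]

lemma mono {s s' t t' : ℝ} (hs : 0 ≤ s) (hss : s ≤ s') (ht : 0 ≤ t) (htt : t ≤ t') :
    N s t ≤ N s' t' :=
  (hN.mono_left t hs hss).trans (hN.mono_right s' ht htt)

lemma exists_support {a b : ℝ} (ha : 0 ≤ a) (hb : 0 ≤ b) (hab : N a b = 1) :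
    ∃ α β : ℝ, 0 ≤ α ∧ 0 ≤ β ∧ α ≤ 1 ∧ β ≤ 1 ∧ α * a + β * b = 1 ∧
      ∀ s t : ℝ, 0 ≤ s → 0 ≤ t → α * s + β * t ≤ N s t := by
  have hne : ((a, b) : ℝ × ℝ) ≠ 0 := by
    intro hc
    rw [Prod.ext_iff] at hc
    have := (hN.eq_zero_iff a b).2 ⟨hc.1, hc.2⟩
    rw [hab] at this; norm_num at this
  set N' : ℝ × ℝ → ℝ := fun p => N p.1 p.2 with hN'
  obtain ⟨g, hg1, hg2⟩ := exists_extension_of_le_sublinear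
    (LinearPMap.mkSpanSingleton ((a, b) : ℝ × ℝ) (1 : ℝ) hne) N'
    (fun c hc x => by
      simp only [hN', Prod.smul_fst, Prod.smul_snd, smul_eq_mul]
      rw [hN.smul, abs_of_pos hc])
    (fun x y => hN.triangle _ _ _ _)
    (fun x => by
      obtain ⟨c, hc⟩ := Submodule.mem_span_singleton (R := ℝ) |>.1 x.2
      have hx : x = ⟨c • ((a,b) : ℝ × ℝ), by rw [hc]; exact x.2⟩ :=
        Subtype.ext hc.symm
      rw [hx, LinearPMap.mkSpanSingleton'_apply]
      simp only [smul_eq_mul, mul_one, hN', Prod.smul_fst, Prod.smul_snd]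
      rw [hN.smul, hab, mul_one]
      exact le_abs_self c)
  have hgab : g ((a, b) : ℝ × ℝ) = 1 := by
    have hmem : ((a,b) : ℝ × ℝ) ∈ (LinearPMap.mkSpanSingleton (K := ℝ) (L := ℝ) (σ := RingHom.id ℝ) ((a, b) : ℝ × ℝ) (1 : ℝ) hne).domain :=
      (Submodule.mem_span_singleton_self ((a,b) : ℝ × ℝ) :
        ((a,b) : ℝ × ℝ) ∈ Submodule.span ℝ {((a,b) : ℝ × ℝ)})
    have := hg1 ⟨(a,b), hmem⟩
    rw [this]
    have : (⟨((a,b) : ℝ × ℝ), hmem⟩ :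
        (LinearPMap.mkSpanSingleton (K := ℝ) (L := ℝ) (σ := RingHom.id ℝ) ((a, b) : ℝ × ℝ) (1 : ℝ) hne).domain) =
        ⟨(1:ℝ) • ((a,b) : ℝ × ℝ), by rw [one_smul]; exact hmem⟩ :=
      Subtype.ext (one_smul ℝ _).symm
    rw [this, LinearPMap.mkSpanSingleton'_apply, smul_eq_mul, mul_one, RingHom.id_apply]
  set α₀ := g ((1, 0) : ℝ × ℝ) with hα₀
  set β₀ := g ((0, 1) : ℝ × ℝ) with hβ₀
  have hgst : ∀ s t : ℝ, g ((s, t) : ℝ × ℝ) = α₀ * s + β₀ * t := by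
    intro s t
    have : ((s, t) : ℝ × ℝ) = s • ((1,0) : ℝ × ℝ) + t • ((0,1) : ℝ × ℝ) := by
      simp [Prod.ext_iff]
    rw [this, map_add, map_smul, map_smul, smul_eq_mul, smul_eq_mul]
    ring
  have hsupp : ∀ s t : ℝ, 0 ≤ s → 0 ≤ t → max α₀ 0 * s + max β₀ 0 * t ≤ N s t := by
    intro s t hs ht
    rcases le_or_gt 0 α₀ with hα | hα <;> rcases le_or_gt 0 β₀ with hβ | hβ
    · rw [max_eq_left hα, max_eq_left hβ, ← hgst]
      exact hg2 (s, t)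
    · rw [max_eq_left hα, max_eq_right hβ.le, zero_mul, add_zero]
      have h1 : α₀ * s ≤ N s 0 := by
        have := hg2 ((s, 0) : ℝ × ℝ)
        rw [hgst] at this
        simpa using this
      exact h1.trans (hN.mono_right s le_rfl ht)
    · rw [max_eq_right hα.le, max_eq_left hβ, zero_mul, zero_add]
      have h1 : β₀ * t ≤ N 0 t := by
        have := hg2 ((0, t) : ℝ × ℝ)
        rw [hgst] at this
        simpa using this
      exact h1.trans (hN.mono_left t le_rfl hs)
    · rw [max_eq_right hα.le, max_eq_right hβ.le, zero_mul, zero_mul, add_zero]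
      exact hN.nonneg s t
  refine ⟨max α₀ 0, max β₀ 0, le_max_right _ _, le_max_right _ _, ?_, ?_, ?_, hsupp⟩
  · have := hsupp 1 0 zero_le_one le_rfl
    rw [mul_one, mul_zero, add_zero, hN.one_zero] at this
    exact this
  · have := hsupp 0 1 le_rfl zero_le_one
    rw [mul_zero, mul_one, zero_add, hN.zero_one] at this
    exact this
  · have h1 : max α₀ 0 * a + max β₀ 0 * b ≤ 1 := by
      have := hsupp a b ha hb
      rwa [hab] at this
    have h2 : (1 : ℝ) ≤ max α₀ 0 * a + max β₀ 0 * b := by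
      have := hgst a b
      rw [hgab] at this
      have ha' : α₀ * a ≤ max α₀ 0 * a := mul_le_mul_of_nonneg_right (le_max_left _ _) ha
      have hb' : β₀ * b ≤ max β₀ 0 * b := mul_le_mul_of_nonneg_right (le_max_left _ _) hb
      linarith
    linarith

end IsAbsoluteNorm

set_option maxHeartbeats 1000000 in
theorem pointwise_bpb_absolute_summand_range (X Y Y₁ Y₂ : Type*)
    [NormedAddCommGroup X] [NormedSpace ℝ X] [CompleteSpace X]
    [NormedAddCommGroup Y] [NormedSpace ℝ Y] [CompleteSpace Y]
    [NormedAddCommGroup Y₁] [NormedSpace ℝ Y₁] [CompleteSpace Y₁]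
    [NormedAddCommGroup Y₂] [NormedSpace ℝ Y₂] [CompleteSpace Y₂]
    (N : ℝ → ℝ → ℝ) (hN : IsAbsoluteNorm N)
    (e : Y ≃L[ℝ] Y₁ × Y₂) (he : ∀ y : Y, ‖y‖ = N ‖(e y).1‖ ‖(e y).2‖)
    (h : HasPointwiseBPB X Y) : HasPointwiseBPB X Y₁ := by
  intro ε hε
  set ε' := min (ε / 2) (1 / 2) with hε'def
  have hε'pos : 0 < ε' := lt_min (by linarith) (by norm_num)
  have hε'le : ε' ≤ ε / 2 := min_le_left _ _
  have hε'half : ε' ≤ 1 / 2 := min_le_right _ _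
  obtain ⟨η, hη, hBPB⟩ := h ε' hε'pos
  refine ⟨η, hη, ?_⟩
  intro T x₀ hT hx₀ hTx₀
  set T' : X →L[ℝ] Y := (e.symm : Y₁ × Y₂ →L[ℝ] Y).comp (T.prod 0) with hT'def
  have hT'app : ∀ x, e (T' x) = (T x, 0) := by
    intro x
    simp [hT'def]
  have hT'norm : ∀ x, ‖T' x‖ = ‖T x‖ := by
    intro x
    rw [he, hT'app, norm_zero]
    exact hN.fst_zero (norm_nonneg _)
  have hT'op : ‖T'‖ = 1 := by
    rw [← hT]
    apply le_antisymm
    · apply ContinuousLinearMap.opNorm_le_bound _ (norm_nonneg T)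
      intro x; rw [hT'norm]; exact T.le_opNorm x
    · apply ContinuousLinearMap.opNorm_le_bound _ (norm_nonneg T')
      intro x; rw [← hT'norm]; exact T'.le_opNorm x
  obtain ⟨S', hS'op, hS'x₀, hS'T'⟩ := hBPB T' x₀ hT'op hx₀ (by rw [hT'norm]; exact hTx₀)
  set u₁ := (e (S' x₀)).1 with hu₁
  set u₂ := (e (S' x₀)).2 with hu₂
  set a := ‖u₁‖ with hadef
  set b := ‖u₂‖ with hbdef
  have ha0' : 0 ≤ a := norm_nonneg _
  have hb0' : 0 ≤ b := norm_nonneg _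
  have hab : N a b = 1 := by rw [← he]; exact hS'x₀
  have hsnd : ∀ y : Y, ‖(e y).2‖ ≤ ‖y‖ := by
    intro y
    rw [he y]
    calc ‖(e y).2‖ = N 0 ‖(e y).2‖ := (hN.snd_zero (norm_nonneg _)).symm
    _ ≤ N ‖(e y).1‖ ‖(e y).2‖ := hN.mono_left _ le_rfl (norm_nonneg _)
  have hb_lt : b < ε' := by
    have h1 : u₂ = (e (S' x₀ - T' x₀)).2 := by
      rw [map_sub]
      simp [hT'app, hu₂]
    calc b = ‖(e (S' x₀ - T' x₀)).2‖ := by rw [hbdef, h1]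
    _ ≤ ‖S' x₀ - T' x₀‖ := hsnd _
    _ = ‖(S' - T') x₀‖ := by simp
    _ ≤ ‖S' - T'‖ * ‖x₀‖ := (S' - T').le_opNorm x₀
    _ = ‖S' - T'‖ := by rw [hx₀, mul_one]
    _ < ε' := hS'T'
  have hb1 : b < 1 := by linarith
  obtain ⟨α, β, hα0, hβ0, hα1, hβ1, heq, hsupp⟩ :=
    hN.exists_support ha0' hb0' hab
  have ha1 : a ≤ 1 := by
    calc a = N a 0 := (hN.fst_zero ha0').symm
    _ ≤ N a b := hN.mono_right _ le_rfl hb0'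
    _ = 1 := hab
  have hβb : β * b ≤ b := by nlinarith
  have hαa : α * a ≤ α := by nlinarith
  have hval : 1 - b ≤ α := by linarith
  have ha0 : 0 < a := by
    have h1 : 0 < α * a := by linarith
    have h2 : α * a ≤ 1 * a := mul_le_mul_of_nonneg_right hα1 ha0'
    linarith
  obtain ⟨f₀, hf₀, hf₀u⟩ : ∃ f₀ : Y₂ →L[ℝ] ℝ, ‖f₀‖ ≤ 1 ∧ f₀ u₂ = b := by
    by_cases hu : u₂ = 0
    · refine ⟨0, by simp, ?_⟩
      rw [hbdef, hu]
      simp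
    · obtain ⟨f, hf1, hf2⟩ := exists_dual_vector ℝ u₂ (norm_ne_zero_iff.mpr hu)
      exact ⟨f, le_of_eq hf1, hf2⟩
  set v : Y₁ := (β / a) • u₁ with hv
  set Φ : Y →L[ℝ] Y₁ :=
    α • ((ContinuousLinearMap.fst ℝ Y₁ Y₂).comp (e : Y →L[ℝ] Y₁ × Y₂)) +
      (f₀.comp ((ContinuousLinearMap.snd ℝ Y₁ Y₂).comp (e : Y →L[ℝ] Y₁ × Y₂))).smulRight v
      with hΦ
  have hΦapp : ∀ y : Y, Φ y = α • (e y).1 + f₀ ((e y).2) • v := by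
    intro y
    simp [hΦ]
  have hvnorm : ‖v‖ = β := by
    rw [hv, norm_smul, Real.norm_eq_abs, abs_of_nonneg (div_nonneg hβ0 ha0.le), ← hadef]
    field_simp
  have hΦle : ∀ y : Y, ‖Φ y‖ ≤ ‖y‖ := by
    intro y
    rw [hΦapp]
    have hf : |f₀ ((e y).2)| ≤ ‖(e y).2‖ := by
      calc |f₀ ((e y).2)| ≤ ‖f₀‖ * ‖(e y).2‖ := f₀.le_opNorm _
      _ ≤ 1 * ‖(e y).2‖ := mul_le_mul_of_nonneg_right hf₀ (norm_nonneg _)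
      _ = ‖(e y).2‖ := one_mul _
    calc ‖α • (e y).1 + f₀ ((e y).2) • v‖
        ≤ ‖α • (e y).1‖ + ‖f₀ ((e y).2) • v‖ := norm_add_le _ _
    _ = α * ‖(e y).1‖ + |f₀ ((e y).2)| * β := by
        rw [norm_smul, norm_smul, Real.norm_eq_abs, abs_of_nonneg hα0,
          Real.norm_eq_abs, hvnorm]
    _ ≤ α * ‖(e y).1‖ + β * ‖(e y).2‖ := by nlinarith [abs_nonneg (f₀ ((e y).2))]
    _ ≤ N ‖(e y).1‖ ‖(e y).2‖ := hsupp _ _ (norm_nonneg _) (norm_nonneg _)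
    _ = ‖y‖ := (he y).symm
  set S : X →L[ℝ] Y₁ := Φ.comp S' with hS
  have hSx₀ : ‖S x₀‖ = 1 := by
    have h1 : S x₀ = (α + b * (β / a)) • u₁ := by
      have : S x₀ = Φ (S' x₀) := rfl
      rw [this, hΦapp, ← hu₁, ← hu₂, hf₀u, hv, add_smul, smul_smul]
    have h2 : (α + b * (β / a)) * a = 1 := by
      field_simp
      nlinarith [heq]
    rw [h1, norm_smul, Real.norm_eq_abs,
      abs_of_nonneg (by positivity : (0:ℝ) ≤ α + b * (β / a)), ← hadef, h2]
  have hSop : ‖S‖ = 1 := by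
    apply le_antisymm
    · apply ContinuousLinearMap.opNorm_le_bound _ zero_le_one
      intro x
      calc ‖S x‖ = ‖Φ (S' x)‖ := rfl
      _ ≤ ‖S' x‖ := hΦle _
      _ ≤ ‖S'‖ * ‖x‖ := S'.le_opNorm x
      _ = 1 * ‖x‖ := by rw [hS'op]
    · have := S.le_opNorm x₀
      rw [hSx₀, hx₀, mul_one] at this
      exact this
  have hΦT' : ∀ x, Φ (T' x) = α • T x := by
    intro x
    rw [hΦapp, hT'app]
    simp
  have hST : ‖S - T‖ ≤ ‖S' - T'‖ + (1 - α) := by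
    apply ContinuousLinearMap.opNorm_le_bound _
      (by linarith [norm_nonneg (S' - T')])
    intro x
    have hdecomp : (S - T) x = Φ (S' x - T' x) + (α - 1) • T x := by
      rw [map_sub, hΦT']
      simp only [ContinuousLinearMap.sub_apply, sub_smul, one_smul]
      have : S x = Φ (S' x) := rfl
      rw [this]
      abel
    rw [hdecomp]
    have hTx : ‖T x‖ ≤ ‖x‖ := by
      have := T.le_opNorm x
      rwa [hT, one_mul] at this
    calc ‖Φ (S' x - T' x) + (α - 1) • T x‖
        ≤ ‖Φ (S' x - T' x)‖ + ‖(α - 1) • T x‖ := norm_add_le _ _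
    _ ≤ ‖S' x - T' x‖ + (1 - α) * ‖T x‖ := by
        have h1 := hΦle (S' x - T' x)
        have h2 : ‖(α - 1) • T x‖ = (1 - α) * ‖T x‖ := by
          rw [norm_smul, Real.norm_eq_abs, abs_of_nonpos (by linarith), neg_sub]
        linarith
    _ ≤ ‖S' - T'‖ * ‖x‖ + (1 - α) * ‖x‖ := by
        have h3 : ‖S' x - T' x‖ ≤ ‖S' - T'‖ * ‖x‖ := by
          have := (S' - T').le_opNorm x
          simpa using this
        have h4 : (1 - α) * ‖T x‖ ≤ (1 - α) * ‖x‖ :=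
          mul_le_mul_of_nonneg_left hTx (by linarith)
        linarith
    _ = (‖S' - T'‖ + (1 - α)) * ‖x‖ := by ring
  refine ⟨S, hSop, hSx₀, ?_⟩
  have h5 : 1 - α ≤ b := by linarith
  calc ‖S - T‖ ≤ ‖S' - T'‖ + (1 - α) := hST
  _ < ε' + ε' := by linarith
  _ ≤ ε := by linarith
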